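/- Let N ≥ 6, a = N-3, u(z) = 1/(2N) - a z/2, f(z) = 2u(z) ln u(z) + a z ln z + (2e/(e+1))(ln N)/N on [0, 1/(N(N-3))] (with 0 ln 0 = 0). Then f(0) > 0 and f(1/(N(N-3))) < 0, and f has exactly one zero in (0, 1/(N(N-3))). -/

import Mathlib

open Real Set

private lemma aux_comp {s : Set ℝ} {g : ℝ → ℝ} (hg : ConvexOn ℝ s g) {t : Set ℝ}
    (ht : Convex ℝ t) (c d : ℝ) (hm : ∀ z ∈ t, c * z + d ∈ s) :
    ConvexOn ℝ t (fun z => g (c * z + d)) := by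
  refine ⟨ht, fun x hx y hy p q hp hq hpq => ?_⟩
  have h1 : c * (p • x + q • y) + d = p • (c * x + d) + q • (c * y + d) := by
    simp only [smul_eq_mul]
    linear_combination (-d) * hpq
  simp only []
  rw [h1]
  exact hg.2 (hm x hx) (hm y hy) hp hq hpq

private lemma aux_affine (t : Set ℝ) (ht : Convex ℝ t) (m b : ℝ) :
    ConvexOn ℝ t (fun z => m * z + b) := by
  refine ⟨ht, fun x _ y _ p q hp hq hpq => le_of_eq ?_⟩
  simp only [smul_eq_mul]
  linear_combination (-b) * hpq

set_option maxHeartbeats 1000000 in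
theorem f_unique_zero (N : ℕ) (hN : 6 ≤ N)
    (f : ℝ → ℝ)
    (hf : f = fun z => 2 * (1 / (2 * (N : ℝ)) - ((N : ℝ) - 3) * z / 2)
        * Real.log (1 / (2 * (N : ℝ)) - ((N : ℝ) - 3) * z / 2)
      + ((N : ℝ) - 3) * z * Real.log z
      + (2 * Real.exp 1 / (Real.exp 1 + 1)) * Real.log N / N) :
    f 0 > 0 ∧ f (1 / ((N : ℝ) * ((N : ℝ) - 3))) < 0 ∧
    ∃! z : ℝ, z ∈ Set.Ioo (0 : ℝ) (1 / ((N : ℝ) * ((N : ℝ) - 3))) ∧ f z = 0 := by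
  have hn : (6:ℝ) ≤ (N:ℝ) := by exact_mod_cast hN
  set n : ℝ := (N:ℝ) with hndef
  have hn0 : (0:ℝ) < n := by linarith
  set a : ℝ := n - 3 with hadef
  have ha3 : (3:ℝ) ≤ a := by simp [hadef]; linarith
  have ha0 : (0:ℝ) < a := by linarith
  set z₁ : ℝ := 1 / (n * a) with hz₁def
  have hz₁pos : 0 < z₁ := by positivity
  have haz₁ : a * z₁ = 1 / n := by
    rw [hz₁def]; field_simp
  set c : ℝ := 2 * Real.exp 1 / (Real.exp 1 + 1) with hcdef
  set C : ℝ := c * Real.log n / n with hCdef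
  have he1 : (2.7182818283:ℝ) < Real.exp 1 := Real.exp_one_gt_d9
  have he2 : Real.exp 1 < 2.7182818286 := Real.exp_one_lt_d9
  have hl2a : Real.log 2 < 0.6931471808 := Real.log_two_lt_d9
  have hl2b : (0.6931471803:ℝ) < Real.log 2 := Real.log_two_gt_d9
  have hep : (0:ℝ) < Real.exp 1 + 1 := by linarith
  have hc1 : c - 1 = (Real.exp 1 - 1) / (Real.exp 1 + 1) := by
    rw [hcdef]; field_simp; ring
  -- log n ≥ 1 + log 2
  have hlogn : 1 + Real.log 2 ≤ Real.log n := by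
    have h6 : Real.exp 1 * 2 ≤ n := by nlinarith
    have := Real.log_le_log (by positivity) h6
    rwa [Real.log_mul (Real.exp_ne_zero 1) two_ne_zero, Real.log_exp] at this
  have hlogn0 : 0 < Real.log n := by linarith
  -- log a ≥ log n - log 2
  have hloga : Real.log n - Real.log 2 ≤ Real.log a := by
    have h2 : n / 2 ≤ a := by rw [hadef]; linarith
    have := Real.log_le_log (by positivity) h2
    rwa [Real.log_div (by linarith : n ≠ 0) two_ne_zero] at this
  -- pointwise rewriting of f
  have hfe : ∀ z : ℝ, f z = (-a * z + 1/n) * Real.log (-a * z + 1/n)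
      + (a * z + 0) * Real.log (a * z + 0)
      + ((a * (Real.log 2 - Real.log a)) * z + (C - Real.log 2 / n)) := by
    intro z
    rw [hf]
    simp only []
    have e1 : 2 * (1/(2*n) - a*z/2) * Real.log (1/(2*n) - a*z/2)
        = (-a * z + 1/n) * Real.log (-a * z + 1/n) - (-a * z + 1/n) * Real.log 2 := by
      rcases eq_or_ne (-a * z + 1/n) 0 with h | h
      · have h' : 1/(2*n) - a*z/2 = 0 := by field_simp at h ⊢; linarith
        rw [h', h]; simp
      · have harg : 1/(2*n) - a*z/2 = (-a * z + 1/n) / 2 := by ring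
        rw [harg, Real.log_div h two_ne_zero]; ring
    have e2 : a * z * Real.log z = (a * z + 0) * Real.log (a * z + 0) - a * z * Real.log a := by
      rcases eq_or_ne z 0 with h | h
      · simp [h]
      · rw [add_zero, Real.log_mul (by linarith : a ≠ 0) h]; ring
    rw [e1, e2, hCdef]
    ring
  -- f 0 > 0
  have key0 : (Real.exp 1 + 1) * Real.log 2 < (Real.exp 1 - 1) * Real.log n := by
    nlinarith [mul_le_mul_of_nonneg_left hlogn (by linarith : (0:ℝ) ≤ Real.exp 1 - 1)]
  have hf0 : f 0 > 0 := by
    have hval : f 0 = ((c - 1) * Real.log n - Real.log 2) / n := by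
      rw [hfe 0, show -a * (0:ℝ) + 1/n = n⁻¹ from by ring,
        show a * (0:ℝ) + 0 = 0 from by ring, Real.log_inv, Real.log_zero, hCdef]
      field_simp
      ring
    rw [hval]
    apply div_pos _ hn0
    rw [hc1]
    rw [div_mul_eq_mul_div, sub_pos, lt_div_iff₀ hep]
    nlinarith [key0]
  -- f z₁ < 0
  have key1 : (Real.exp 1 - 1) * Real.log n < (Real.exp 1 + 1) * Real.log a := by
    have hl2pos : (0:ℝ) < Real.log 2 := by linarith
    have t1 : (Real.exp 1 + 1) * Real.log 2 < 3.7182818286 * 0.6931471808 :=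
      mul_lt_mul'' (by linarith) hl2a (by linarith) hl2pos.le
    have s1 : (Real.exp 1 + 1) * Real.log 2 < 2 * Real.log n := by linarith
    nlinarith [s1, mul_le_mul_of_nonneg_left hloga (le_of_lt hep)]
  have hu1 : -a * z₁ + 1/n = 0 := by rw [← haz₁]; ring
  have hfz₁ : f z₁ < 0 := by
    have hval : f z₁ = ((c - 1) * Real.log n - Real.log a) / n := by
      rw [hfe z₁, hu1, show a * z₁ + 0 = n⁻¹ from by rw [haz₁]; ring,
        Real.log_inv, Real.log_zero, hCdef, hz₁def]
      field_simp
      ring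
    rw [hval]
    apply div_neg_of_neg_of_pos _ hn0
    rw [hc1, div_mul_eq_mul_div, sub_neg, div_lt_iff₀ hep]
    nlinarith [key1]
  refine ⟨hf0, hfz₁, ?_⟩
  -- convexity
  have hfun : f = (fun z => (fun x => x * Real.log x) (-a * z + 1/n))
      + ((fun z => (fun x => x * Real.log x) (a * z + 0))
      + fun z => (a * (Real.log 2 - Real.log a)) * z + (C - Real.log 2 / n)) := by
    funext z
    simp only [Pi.add_apply]
    rw [hfe z]
    ring
  have hsub1 : ∀ z ∈ Icc (0:ℝ) z₁, -a * z + 1/n ∈ Ici (0:ℝ) := by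
    intro z hz
    simp only [mem_Ici]
    have : a * z ≤ a * z₁ := mul_le_mul_of_nonneg_left hz.2 ha0.le
    rw [haz₁] at this
    linarith
  have hsub2 : ∀ z ∈ Icc (0:ℝ) z₁, a * z + 0 ∈ Ici (0:ℝ) := by
    intro z hz
    simp only [mem_Ici, add_zero]
    exact mul_nonneg ha0.le hz.1
  have hconv : ConvexOn ℝ (Icc (0:ℝ) z₁) f := by
    rw [hfun]
    exact (aux_comp Real.convexOn_mul_log (convex_Icc _ _) (-a) (1/n) hsub1).add
      ((aux_comp Real.convexOn_mul_log (convex_Icc _ _) a 0 hsub2).add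
        (aux_affine _ (convex_Icc _ _) _ _))
  -- continuity
  have hcont : ContinuousOn f (Icc (0:ℝ) z₁) := by
    rw [hfun]
    apply Continuous.continuousOn
    apply Continuous.add
    · exact Real.continuous_mul_log.comp (by continuity)
    apply Continuous.add
    · exact Real.continuous_mul_log.comp (by continuity)
    · continuity
  -- existence of a zero
  obtain ⟨z0, hz0mem, hz0⟩ : ∃ z ∈ Ioo (0:ℝ) z₁, f z = 0 := by
    have h := intermediate_value_Ioo' hz₁pos.le hcont
    have h0mem : (0:ℝ) ∈ Ioo (f z₁) (f 0) := ⟨hfz₁, hf0⟩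
    obtain ⟨z, hz, hfz⟩ := h h0mem
    exact ⟨z, hz, hfz⟩
  -- any point strictly to the right of a zero is negative
  have key : ∀ w w' : ℝ, w ∈ Ioo (0:ℝ) z₁ → w' ∈ Ioo (0:ℝ) z₁ → f w = 0 → w < w' →
      f w' < 0 := by
    intro w w' hw hw' hfw hlt
    have hden : 0 < z₁ - w := by linarith [hw'.2]
    set p : ℝ := (z₁ - w') / (z₁ - w) with hpdef
    set q : ℝ := (w' - w) / (z₁ - w) with hqdef
    have hp : 0 ≤ p := div_nonneg (by linarith [hw'.2]) hden.le
    have hq : 0 < q := div_pos (by linarith) hden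
    have hpq : p + q = 1 := by rw [hpdef, hqdef]; field_simp; ring
    have hcomb : p • w + q • z₁ = w' := by
      simp only [smul_eq_mul, hpdef, hqdef]
      field_simp
      ring
    have hwmem : w ∈ Icc (0:ℝ) z₁ := ⟨hw.1.le, hw.2.le⟩
    have hz₁mem : z₁ ∈ Icc (0:ℝ) z₁ := ⟨hz₁pos.le, le_refl _⟩
    have hle := hconv.2 hwmem hz₁mem hp hq.le hpq
    rw [hcomb] at hle
    calc f w' ≤ p • f w + q • f z₁ := hle
      _ = q * f z₁ := by rw [hfw]; simp [smul_eq_mul]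
      _ < 0 := mul_neg_of_pos_of_neg hq hfz₁
  refine ⟨z0, ⟨hz0mem, hz0⟩, ?_⟩
  rintro y ⟨hy, hfy⟩
  rcases lt_trichotomy y z0 with h | h | h
  · exact absurd hz0 (ne_of_lt (key y z0 hy hz0mem hfy h))
  · exact h
  · exact absurd hfy (ne_of_lt (key z0 y hz0mem hy hz0 h))
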